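/- (1) The category C⁰ of arc-generated topological spaces is cartesian closed: the exponential law for sets restricts to a natural bijection C⁰(A, C⁰(X,Y)) ≅ C⁰(A × X, Y), where the mapping space C⁰(X,Y) is obtained by applying the arc-generation coreflection α to the set of continuous maps with the compact-open topology, and A × X is the product in C⁰. (2) If X and Y are arc-generated spaces and Y is locally compact, then the product of X and Y in C⁰ coincides with the product in the category of topological spaces. -/

import Mathlib

set_option autoImplicit false

open Set Function Topology

noncomputable section

/-- The topology on `X` coinduced by all continuous curves `ℝ → X`. -/
def arcGen (X : Type) [TopologicalSpace X] : TopologicalSpace X :=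
  ⨆ f : {f : ℝ → X // Continuous f}, TopologicalSpace.coinduced f.1 inferInstance

/-- A topological space is arc-generated if its topology is final for the set of all
continuous curves `ℝ → X`, i.e. coincides with the topology coinduced by them. -/
def IsArcGenerated (X : Type) [t : TopologicalSpace X] : Prop := t = arcGen X

open Filter

set_option linter.unusedSectionVars false
set_option linter.unusedVariables false

section Basic
variable {X Y : Type} [tX : TopologicalSpace X] [tY : TopologicalSpace Y]

theorem arcGen_le : arcGen X ≤ tX :=
  iSup_le fun f => continuous_iff_coinduced_le.mp f.2

theorem curve_arcGen {c : ℝ → X} (hc : Continuous c) : Continuous[_, arcGen X] c :=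
  continuous_iff_coinduced_le.mpr
    (le_iSup (fun f : {f : ℝ → X // Continuous f} =>
      TopologicalSpace.coinduced f.1 inferInstance) ⟨c, hc⟩)

theorem continuous_arcGen_dom {s : TopologicalSpace Y} {g : X → Y} :
    Continuous[arcGen X, s] g ↔ ∀ c : {c : ℝ → X // Continuous c}, Continuous[_, s] (g ∘ c.1) := by
  rw [arcGen, continuous_iSup_dom]
  exact forall_congr' fun c => continuous_coinduced_dom

theorem isOpen_arcGen_iff {V : Set X} :
    IsOpen[arcGen X] V ↔ ∀ c : {c : ℝ → X // Continuous c}, IsOpen (c.1 ⁻¹' V) := by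
  rw [arcGen, isOpen_iSup_iff]
  exact forall_congr' fun c => isOpen_coinduced

theorem continuous_comp_explicit {Z : Type} {t1 : TopologicalSpace X} {t2 : TopologicalSpace Y}
    {t3 : TopologicalSpace Z} {g : Y → Z} {f : X → Y} (hg : Continuous[t2, t3] g)
    (hf : Continuous[t1, t2] f) : Continuous[t1, t3] fun x => g (f x) :=
  continuous_def.mpr fun U hU => continuous_def.mp hf _ (continuous_def.mp hg U hU)

theorem continuous_into_arcGen (hX : IsArcGenerated X) {g : X → Y} (hg : Continuous g) :
    Continuous[tX, arcGen Y] g := by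
  rw [IsArcGenerated] at hX
  rw [hX, continuous_arcGen_dom]
  exact fun c => curve_arcGen (hg.comp c.2)

end Basic

section PL
variable {E : Type} [NormedAddCommGroup E] [NormedSpace ℝ E]

private def clamp01 (x : ℝ) : ℝ := min (max x 0) 1

private lemma clamp01_cont : Continuous clamp01 :=
  (continuous_id.max continuous_const).min continuous_const

private lemma clamp01_of_nonpos {x : ℝ} (h : x ≤ 0) : clamp01 x = 0 := by
  unfold clamp01; rw [max_eq_right h, min_eq_left (by norm_num)]

private lemma clamp01_of_one_le {x : ℝ} (h : 1 ≤ x) : clamp01 x = 1 := by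
  unfold clamp01; rw [max_eq_left (by linarith), min_eq_right h]

private lemma clamp01_of_mem {x : ℝ} (h0 : 0 ≤ x) (h1 : x ≤ 1) : clamp01 x = x := by
  unfold clamp01; rw [max_eq_left h0, min_eq_left h1]

private def plFun (a : ℕ → E) (N : ℕ) (x : ℝ) : E :=
  a 0 + ∑ n ∈ Finset.range N, clamp01 (x - n) • (a (n + 1) - a n)

private lemma plFun_continuous (a : ℕ → E) (N : ℕ) : Continuous (plFun a N) :=
  continuous_const.add <| continuous_finset_sum _ fun n _ =>
    (clamp01_cont.comp (continuous_id.sub continuous_const)).smul continuous_const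

private lemma plFun_congr (a : ℕ → E) {N M : ℕ} {x : ℝ} (hN : x ≤ N) (hM : N ≤ M) :
    plFun a N x = plFun a M x := by
  unfold plFun
  congr 1
  refine Finset.sum_subset (Finset.range_subset_range.2 hM) fun n hn hnN => ?_
  have hn' : (N : ℝ) ≤ n := by
    have := Nat.le_of_not_lt (fun h => hnN (Finset.mem_range.2 h))
    exact_mod_cast this
  rw [clamp01_of_nonpos (by linarith), zero_smul]

private def plInterp (a : ℕ → E) (x : ℝ) : E := plFun a (⌈x⌉₊ + 1) x

private lemma plInterp_eq_plFun (a : ℕ → E) {N : ℕ} {x : ℝ} (h : x ≤ N) :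
    plInterp a x = plFun a N x := by
  have hx : x ≤ (⌈x⌉₊ + 1 : ℕ) := by
    push_cast
    have := Nat.le_ceil x
    linarith
  rcases le_total (⌈x⌉₊ + 1) N with hN | hN
  · exact plFun_congr a hx hN
  · exact (plFun_congr a h hN).symm

private lemma plInterp_continuous (a : ℕ → E) : Continuous (plInterp a) := by
  rw [continuous_iff_continuousAt]
  intro x₀
  obtain ⟨N, hN⟩ : ∃ N : ℕ, x₀ < N := exists_nat_gt x₀
  have hev : ∀ᶠ x in 𝓝 x₀, plFun a N x = plInterp a x := by
    filter_upwards [eventually_lt_nhds hN] with x hx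
    exact (plInterp_eq_plFun a hx.le).symm
  exact ((plFun_continuous a N).continuousAt).congr hev

private lemma plInterp_nat (a : ℕ → E) (m : ℕ) : plInterp a (m : ℝ) = a m := by
  rw [plInterp_eq_plFun a (le_refl (m : ℝ))]
  unfold plFun
  rw [Finset.sum_congr rfl (fun n hn => ?_), Finset.sum_range_sub (f := a)]
  · abel
  · have hn' : n + 1 ≤ m := Finset.mem_range.1 hn
    have : (1 : ℝ) ≤ (m : ℝ) - n := by
      have : ((n : ℝ) + 1) ≤ m := by exact_mod_cast hn'
      linarith
    rw [clamp01_of_one_le this, one_smul]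

private lemma plInterp_affine (a : ℕ → E) (m : ℕ) {x : ℝ} (h1 : (m : ℝ) ≤ x)
    (h2 : x ≤ (m : ℝ) + 1) :
    plInterp a x = a m + (x - m) • (a (m + 1) - a m) := by
  have : x ≤ ((m + 1 : ℕ) : ℝ) := by push_cast; linarith
  rw [plInterp_eq_plFun a this]
  unfold plFun
  rw [Finset.sum_range_succ, Finset.sum_congr rfl (fun n hn => ?_),
    Finset.sum_range_sub (f := a), clamp01_of_mem (by linarith) (by linarith)]
  · abel
  · have hn' : n + 1 ≤ m := Finset.mem_range.1 hn
    have : (1 : ℝ) ≤ x - n := by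
      have : ((n : ℝ) + 1) ≤ m := by exact_mod_cast hn'
      linarith
    rw [clamp01_of_one_le this, one_smul]

private lemma plInterp_tendsto {a : ℕ → E} {L : E} (ha : Tendsto a atTop (𝓝 L)) :
    Tendsto (plInterp a) atTop (𝓝 L) := by
  rw [Metric.tendsto_atTop] at ha ⊢
  intro ε hε
  obtain ⟨N, hN⟩ := ha (ε / 2) (by linarith)
  refine ⟨(N : ℝ), fun x hx => ?_⟩
  have hx0 : (0 : ℝ) ≤ x := le_trans (Nat.cast_nonneg N) hx
  set m := ⌊x⌋₊ with hm
  have hmN : N ≤ m := Nat.le_floor hx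
  have h1 : (m : ℝ) ≤ x := Nat.floor_le hx0
  have h2 : x ≤ (m : ℝ) + 1 := (Nat.lt_floor_add_one x).le
  rw [plInterp_affine a m h1 h2]
  have key : ∀ (t : ℝ) (u v w : E), u + t • (v - u) - w = (1 - t) • (u - w) + t • (v - w) := by
    intro t u v w
    rw [sub_smul, one_smul, smul_sub, smul_sub, smul_sub]
    abel
  rw [dist_eq_norm, key]
  set t := x - (m : ℝ) with ht
  have ht0 : 0 ≤ t := by rw [ht]; linarith
  have ht1 : t ≤ 1 := by rw [ht]; linarith
  have b1 : ‖a m - L‖ < ε / 2 := by rw [← dist_eq_norm]; exact hN m hmN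
  have b2 : ‖a (m + 1) - L‖ < ε / 2 := by rw [← dist_eq_norm]; exact hN (m + 1) (by omega)
  calc ‖(1 - t) • (a m - L) + t • (a (m + 1) - L)‖
      ≤ ‖(1 - t) • (a m - L)‖ + ‖t • (a (m + 1) - L)‖ := norm_add_le _ _
    _ = (1 - t) * ‖a m - L‖ + t * ‖a (m + 1) - L‖ := by
        rw [norm_smul, norm_smul, Real.norm_eq_abs, Real.norm_eq_abs,
          abs_of_nonneg (by linarith), abs_of_nonneg ht0]
    _ < ε := by
        have e1 := mul_le_mul_of_nonneg_left b1.le (by linarith : (0:ℝ) ≤ 1 - t)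
        have e2 := mul_le_mul_of_nonneg_left b2.le ht0
        nlinarith

lemma exists_curve (a : ℕ → E) (L : E) (ha : Tendsto a atTop (𝓝 L)) :
    ∃ φ : ℝ → E, Continuous φ ∧ φ 0 = L ∧ ∀ n : ℕ, φ (1 / (n + 1)) = a n := by
  refine ⟨fun u => if u ≤ 0 then L else plInterp a (1 / u - 1), ?_, by norm_num, fun n => ?_⟩
  · rw [continuous_iff_continuousAt]
    intro u₀
    rcases lt_trichotomy u₀ 0 with h | h | h
    · have : ∀ᶠ u in 𝓝 u₀, (L : E) = if u ≤ 0 then L else plInterp a (1 / u - 1) := by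
        filter_upwards [eventually_lt_nhds h] with u hu
        rw [if_pos hu.le]
      exact continuousAt_const.congr this
    · subst h
      have : ContinuousAt (fun u : ℝ => if u ≤ 0 then L else plInterp a (1 / u - 1)) 0 := by
        rw [ContinuousAt]
        have h0 : (if (0:ℝ) ≤ 0 then L else plInterp a (1 / 0 - 1)) = L := if_pos le_rfl
        rw [h0, ← nhdsLE_sup_nhdsGT (0 : ℝ), tendsto_sup]
        constructor
        · refine Tendsto.congr' ?_
            (tendsto_const_nhds : Tendsto (fun _ : ℝ => L) (𝓝[≤] (0:ℝ)) (𝓝 L))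
          filter_upwards [self_mem_nhdsWithin] with u (hu : u ≤ 0)
          rw [if_pos hu]
        · have hcomp : Tendsto (fun u : ℝ => 1 / u - 1) (𝓝[>] 0) atTop := by
            have := tendsto_inv_nhdsGT_zero (𝕜 := ℝ)
            have := tendsto_atTop_add_const_right (𝓝[>] (0:ℝ)) (-1 : ℝ) this
            simpa [one_div, sub_eq_add_neg] using this
          refine Tendsto.congr' ?_ ((plInterp_tendsto ha).comp hcomp)
          filter_upwards [self_mem_nhdsWithin] with u (hu : 0 < u)
          rw [if_neg (not_le.2 hu)]
          rfl
      exact this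
    · have hc : ContinuousAt (fun u : ℝ => plInterp a (1 / u - 1)) u₀ :=
        ((plInterp_continuous a).continuousAt).comp
          (((continuousAt_const.div continuousAt_id h.ne').sub continuousAt_const))
      refine hc.congr ?_
      filter_upwards [eventually_gt_nhds h] with u hu
      rw [if_neg (not_le.2 hu)]
  · have hpos : (0 : ℝ) < 1 / ((n : ℝ) + 1) := by positivity
    have h1 : (fun u : ℝ => if u ≤ 0 then L else plInterp a (1 / u - 1)) (1 / ((n : ℝ) + 1))
        = plInterp a (1 / (1 / ((n : ℝ) + 1)) - 1) := if_neg (not_le.2 hpos)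
    rw [h1, one_div_one_div]
    have h2 : ((n : ℝ) + 1) - 1 = (n : ℝ) := by ring
    rw [h2, plInterp_nat]

end PL

section Core

/-- A set in `ℝ × ℝ` whose preimage under every continuous curve is open, is open. -/
theorem isOpen_of_curves_real_prod {V : Set (ℝ × ℝ)}
    (hV : ∀ c : ℝ → ℝ × ℝ, Continuous c → IsOpen (c ⁻¹' V)) : IsOpen V := by
  rw [Metric.isOpen_iff]
  intro p hp
  by_contra h
  push_neg at h
  have hbad : ∀ n : ℕ, ∃ q : ℝ × ℝ, dist q p < 1 / (n + 1) ∧ q ∉ V := by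
    intro n
    obtain ⟨q, hq1, hq2⟩ := Set.not_subset.1 (h (1 / (n + 1)) (by positivity))
    exact ⟨q, Metric.mem_ball.1 hq1, hq2⟩
  choose a ha1 ha2 using hbad
  have haL : Filter.Tendsto a Filter.atTop (𝓝 p) := by
    rw [tendsto_iff_dist_tendsto_zero]
    exact squeeze_zero (fun n => dist_nonneg) (fun n => (ha1 n).le)
      tendsto_one_div_add_atTop_nhds_zero_nat
  obtain ⟨φ, hφc, hφ0, hφn⟩ := exists_curve a p haL
  obtain ⟨ε, hε, hball⟩ := Metric.isOpen_iff.1 (hV φ hφc) 0 (by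
    show φ 0 ∈ V
    rw [hφ0]; exact hp)
  obtain ⟨n, hn⟩ := exists_nat_one_div_lt hε
  have hmem : (1 / ((n : ℝ) + 1)) ∈ Metric.ball (0 : ℝ) ε := by
    rw [Metric.mem_ball, Real.dist_eq, sub_zero, abs_of_pos (by positivity)]
    exact hn
  have : φ (1 / ((n : ℝ) + 1)) ∈ V := hball hmem
  rw [hφn n] at this
  exact ha2 n this

variable {X Y : Type} [tX : TopologicalSpace X] [tY : TopologicalSpace Y]

/-- If `Y` is arc-generated, then a set in `ℝ × Y` whose preimage under every
continuous curve is open, is open in the product topology. -/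
theorem isOpen_of_curves_real_prod' (hY : IsArcGenerated Y) {W : Set (ℝ × Y)}
    (hW : ∀ c : ℝ → ℝ × Y, Continuous c → IsOpen (c ⁻¹' W)) : IsOpen W := by
  have slice : ∀ y : Y, Continuous fun t : ℝ => ((t, y) ∈ W : Prop) :=
    fun y => isOpen_iff_continuous_mem.mp
      (hW (fun t => (t, y)) (continuous_id.prodMk continuous_const))
  set ψ : Y → C(ℝ, Prop) := fun y => ⟨fun t => (t, y) ∈ W, slice y⟩ with hψdef
  have hψ : Continuous ψ := by
    rw [IsArcGenerated] at hY
    rw [hY, continuous_arcGen_dom]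
    intro c
    have hVopen : IsOpen {q : ℝ × ℝ | (q.2, c.1 q.1) ∈ W} := by
      refine isOpen_of_curves_real_prod fun d hd => ?_
      exact hW (fun u => ((d u).2, c.1 (d u).1))
        ((continuous_snd.comp hd).prodMk (c.2.comp (continuous_fst.comp hd)))
    have hχ : Continuous fun q : ℝ × ℝ => ((q.2, c.1 q.1) ∈ W : Prop) :=
      isOpen_iff_continuous_mem.mp hVopen
    have heq : ψ ∘ c.1 = fun s => ContinuousMap.curry ⟨_, hχ⟩ s :=
      funext fun s => ContinuousMap.ext fun t => rfl
    rw [heq]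
    exact (ContinuousMap.curry _).continuous
  have huc := ContinuousMap.continuous_uncurry_of_continuous (⟨ψ, hψ⟩ : C(Y, C(ℝ, Prop)))
  rw [isOpen_iff_continuous_mem]
  exact huc.comp (continuous_snd.prodMk continuous_fst)

/-- Part 2 core: with `X`, `Y` arc-generated and `Y` locally compact, every
`arcGen`-open subset of `X × Y` is open in the product topology. -/
theorem isOpen_of_curves_prod (hX : IsArcGenerated X) (hY : IsArcGenerated Y)
    (hloc : LocallyCompactSpace Y) {U : Set (X × Y)}
    (hU : ∀ c : ℝ → X × Y, Continuous c → IsOpen (c ⁻¹' U)) : IsOpen U := by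
  have slice : ∀ x : X, Continuous fun y : Y => ((x, y) ∈ U : Prop) := by
    intro x
    refine isOpen_iff_continuous_mem.mp ?_
    have : IsOpen[arcGen Y] {y : Y | (x, y) ∈ U} := by
      rw [isOpen_arcGen_iff]
      exact fun c => hU (fun t => (x, c.1 t)) (continuous_const.prodMk c.2)
    rw [IsArcGenerated] at hY
    rw [hY]
    exact this
  set Φ : X → C(Y, Prop) := fun x => ⟨fun y => (x, y) ∈ U, slice x⟩ with hΦdef
  have hΦ : Continuous Φ := by
    rw [IsArcGenerated] at hX
    rw [hX, continuous_arcGen_dom]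
    intro γ
    have hWopen : IsOpen {q : ℝ × Y | (γ.1 q.1, q.2) ∈ U} := by
      refine isOpen_of_curves_real_prod' hY fun d hd => ?_
      exact hU (fun u => (γ.1 (d u).1, (d u).2))
        ((γ.2.comp (continuous_fst.comp hd)).prodMk (continuous_snd.comp hd))
    have hχ : Continuous fun q : ℝ × Y => ((γ.1 q.1, q.2) ∈ U : Prop) :=
      isOpen_iff_continuous_mem.mp hWopen
    have heq : Φ ∘ γ.1 = fun s => ContinuousMap.curry ⟨_, hχ⟩ s :=
      funext fun s => ContinuousMap.ext fun y => rfl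
    rw [heq]
    exact (ContinuousMap.curry _).continuous
  have huc := ContinuousMap.continuous_uncurry_of_continuous (⟨Φ, hΦ⟩ : C(X, C(Y, Prop)))
  exact isOpen_iff_continuous_mem.mpr huc

/-- `ℝ × X` is arc-generated whenever `X` is. -/
theorem isArcGenerated_real_prod (hX : IsArcGenerated X) : IsArcGenerated (ℝ × X) := by
  refine le_antisymm (fun W hW => ?_) arcGen_le
  rw [isOpen_arcGen_iff] at hW
  exact isOpen_of_curves_real_prod' hX fun c hc => hW ⟨c, hc⟩

theorem isArcGenerated_prod (hX : IsArcGenerated X) (hY : IsArcGenerated Y)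
    (hloc : LocallyCompactSpace Y) : IsArcGenerated (X × Y) := by
  refine le_antisymm (fun U hU => ?_) arcGen_le
  rw [isOpen_arcGen_iff] at hU
  exact isOpen_of_curves_prod hX hY hloc fun c hc => hU ⟨c, hc⟩

end Core



/-- The mapping space of the category `C⁰`: the set of continuous maps with the
arc-generated coreflection of the compact-open topology. -/
def c0MapTop (X Y : Type) [TopologicalSpace X] [TopologicalSpace Y] :
    TopologicalSpace C(X, Y) :=
  arcGen C(X, Y)

section Main
variable {A X Y : Type} [tA : TopologicalSpace A] [tX : TopologicalSpace X]
  [tY : TopologicalSpace Y]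

theorem uncurry_continuous {F : A → C(X, Y)} (hF : Continuous[tA, c0MapTop X Y] F) :
    Continuous[arcGen (A × X), tY] fun p => F p.1 p.2 := by
  rw [continuous_arcGen_dom]
  intro c
  have hF' : Continuous[tA, ContinuousMap.compactOpen] F :=
    continuous_le_rng arcGen_le hF
  have h1 : Continuous fun s : ℝ => F (c.1 s).1 := hF'.comp (continuous_fst.comp c.2)
  have h2 : Continuous fun s : ℝ =>
      (F (c.1 s).1).comp ⟨fun u : ℝ => (c.1 u).2, continuous_snd.comp c.2⟩ :=
    (ContinuousMap.continuous_precomp _).comp h1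
  have h3 := ContinuousMap.continuous_uncurry_of_continuous (⟨_, h2⟩ : C(ℝ, C(ℝ, Y)))
  exact h3.comp (continuous_id.prodMk continuous_id : Continuous fun s : ℝ => (s, s))

theorem slice_continuous (hX : IsArcGenerated X) {f : A × X → Y}
    (hf : Continuous[arcGen (A × X), tY] f) (a : A) : Continuous fun x => f (a, x) := by
  refine continuous_le_dom (show tX = arcGen X from hX).le ?_
  rw [continuous_arcGen_dom]
  intro c
  exact continuous_comp_explicit (g := f) (f := fun t => (a, c.1 t)) hf
    (curve_arcGen (continuous_const.prodMk c.2))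

theorem curry_continuous (hA : IsArcGenerated A) (hX : IsArcGenerated X)
    {f : A × X → Y} (hf : Continuous[arcGen (A × X), tY] f) :
    Continuous[tA, c0MapTop X Y]
      fun a => (⟨fun x => f (a, x), slice_continuous hX hf a⟩ : C(X, Y)) := by
  refine continuous_le_dom (show tA = arcGen A from hA).le ?_
  rw [continuous_arcGen_dom]
  intro γ
  have hRX : IsArcGenerated (ℝ × X) := isArcGenerated_real_prod hX
  have hg : Continuous fun q : ℝ × X => f (γ.1 q.1, q.2) := by
    have hmap : Continuous fun q : ℝ × X => (γ.1 q.1, q.2) :=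
      (γ.2.comp continuous_fst).prodMk continuous_snd
    exact continuous_comp_explicit (g := f) (f := fun q : ℝ × X => (γ.1 q.1, q.2)) hf
      (continuous_into_arcGen hRX hmap)
  have heq : (fun a => (⟨fun x => f (a, x), slice_continuous hX hf a⟩ : C(X, Y))) ∘ γ.1
      = fun s => ContinuousMap.curry ⟨_, hg⟩ s :=
    funext fun s => ContinuousMap.ext fun x => rfl
  show Continuous[_, c0MapTop X Y] _
  rw [heq]
  exact curve_arcGen (ContinuousMap.curry _).continuous

end Main

/-- **Statement 7.** (1) The category `C⁰` of arc-generated spaces is cartesian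
closed: for arc-generated `A`, `X`, `Y`, the exponential law for sets restricts to a
(natural) bijection `C⁰(A, C⁰(X,Y)) ≅ C⁰(A × X, Y)`, where the product `A × X` is
taken in `C⁰` (i.e. carries `arcGen` of the product topology) and the mapping space
carries `arcGen` of the compact-open topology.
(2) If `X` and `Y` are arc-generated and `Y` is locally compact, then the product of
`X` and `Y` in `C⁰` coincides with the product in `Top`, i.e. the product topology is
already arc-generated. -/
theorem c0_cartesianClosed_and_locallyCompact_prod :
    (∀ (A X Y : Type) [TopologicalSpace A] [TopologicalSpace X] [TopologicalSpace Y],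
      IsArcGenerated A → IsArcGenerated X → IsArcGenerated Y →
      ∃ e : {F : A → C(X, Y) // Continuous[_, c0MapTop X Y] F} ≃
            {f : A × X → Y // Continuous[arcGen (A × X), _] f},
        ∀ (F : {F : A → C(X, Y) // Continuous[_, c0MapTop X Y] F}) (a : A) (x : X),
          (e F).1 (a, x) = (F.1 a) x) ∧
    ∀ (X Y : Type) [TopologicalSpace X] [TopologicalSpace Y],
      IsArcGenerated X → IsArcGenerated Y → LocallyCompactSpace Y →
      IsArcGenerated (X × Y) := by
  constructor
  · intro A X Y tA tX tY hA hX hY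
    refine ⟨⟨fun F => ⟨fun p => F.1 p.1 p.2, uncurry_continuous F.2⟩,
      fun f => ⟨fun a => ⟨fun x => f.1 (a, x), slice_continuous hX f.2 a⟩,
        curry_continuous hA hX f.2⟩, ?_, ?_⟩, fun F a x => rfl⟩
    · intro F
      exact Subtype.ext (funext fun a => ContinuousMap.ext fun x => rfl)
    · intro f
      exact Subtype.ext (funext fun p => rfl)
  · intro X Y tX tY hX hY hloc
    exact isArcGenerated_prod hX hY hloc
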